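/- Aumann–Drèze value as a Myerson value on component-complete networks (Section 5.1): Let g be a network on a finite player set N such that for every component C ∈ N/g the restricted network g|_C is complete (every two distinct players of C are linked in g). Then for every TU-game v on N and every player i ∈ N, Sh_i(C, v|_C) = Sh_i(N, v^g), where C ∈ N/g is the component containing i; that is, the Aumann–Drèze value of (N, v, N/g) coincides with the Myerson value of (N, v, g). -/

import Mathlib

/-!
Section 5.1: on networks whose components are complete, the Aumann–Drèze value
coincides with the Myerson value.
-/

namespace Stmt17

/-- A TU-game on the player set `N`: a function on coalitions vanishing at `∅`. -/
abbrev Game (N : Type*) := {v : Finset N → ℝ // v ∅ = 0}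

variable {N : Type*} [Fintype N] [DecidableEq N]

/-- The Shapley value of the game `w` on the player set `M`. -/
noncomputable def shapley (M : Finset N) (w : Finset N → ℝ) (i : N) : ℝ :=
  ∑ S ∈ M.powerset.filter (fun S => i ∈ S),
    ((((S.card - 1).factorial * (M.card - S.card).factorial : ℕ) : ℝ) /
        ((M.card.factorial : ℕ) : ℝ)) * (w S - w (S.erase i))

/-- The restriction `g|_S` of the network `g` to the coalition `S` (viewed as a
graph on `N` with no links outside `S`). -/
def restrictGraph (g : SimpleGraph N) (S : Finset N) : SimpleGraph N where
  Adj a b := g.Adj a b ∧ a ∈ S ∧ b ∈ S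
  symm := ⟨fun _ _ h => ⟨h.1.symm, h.2.2, h.2.1⟩⟩
  loopless := ⟨fun a h => g.loopless.irrefl a h.1⟩

/-- The component of `S/g` (the partition of `S` into components of `g|_S`)
containing the player `i ∈ S`. -/
noncomputable def compIn (g : SimpleGraph N) (S : Finset N) (i : N) : Finset N :=
  (Set.toFinite {j | (restrictGraph g S).Reachable i j}).toFinset

/-- The graph game `v^g`, with `v^g(S) = Σ_{T ∈ S/g} v(T)`. -/
noncomputable def graphGame (g : SimpleGraph N) (v : Game N) (S : Finset N) : ℝ :=
  ∑ T ∈ S.image (fun i => compIn g S i), v.1 T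

/-- The component of `N/g` containing the player `i`. -/
noncomputable def compOf (g : SimpleGraph N) (i : N) : Finset N :=
  (Set.toFinite {j | g.Reachable i j}).toFinset

/-! ### Combinatorial lemmas -/

/-- Hockey-stick identity. -/
lemma hockey (a m : ℕ) :
    ∑ r ∈ Finset.range (m+1), (a+r).choose r = (a+m+1).choose m := by
  induction m with
  | zero => simp
  | succ m ih =>
      rw [Finset.sum_range_succ, ih, show a+(m+1) = a+m+1 from by omega,
        Nat.choose_succ_succ (a+m+1) m]

/-- Triangular double-sum exchange. -/
lemma sum_swap_tri (g : ℕ → ℕ → ℕ) (m : ℕ) :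
    ∑ r ∈ Finset.range (m+1), ∑ y ∈ Finset.range (m-r+1), g r y
      = ∑ k ∈ Finset.range (m+1), ∑ r ∈ Finset.range (k+1), g r (k-r) := by
  induction m with
  | zero => simp
  | succ m ih =>
      rw [Finset.sum_range_succ,
        Finset.sum_range_succ (fun k => ∑ r ∈ Finset.range (k+1), g r (k-r)) (m+1)]
      have hL : ∀ r ∈ Finset.range (m+1), ∑ y ∈ Finset.range (m+1-r+1), g r y
          = (∑ y ∈ Finset.range (m-r+1), g r y) + g r (m+1-r) := by
        intro r hr
        rw [Finset.mem_range] at hr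
        rw [show m+1-r+1 = (m-r+1)+1 from by omega, Finset.sum_range_succ,
          show m-r+1 = m+1-r from by omega]
      rw [Finset.sum_congr rfl hL, Finset.sum_add_distrib, ih,
        Finset.sum_range_succ (fun r => g r (m+1-r)) (m+1)]
      simp [Nat.sub_self]
      ring

/-- A Vandermonde-type identity with upper summation indices. -/
lemma vander (a b : ℕ) : ∀ m : ℕ,
    ∑ r ∈ Finset.range (m+1), (a+r).choose r * (b+(m-r)).choose (m-r) = (a+b+m+1).choose m := by
  induction b with
  | zero =>
      intro m
      have h : ∀ r ∈ Finset.range (m+1),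
          (a+r).choose r * (0+(m-r)).choose (m-r) = (a+r).choose r := by
        intro r _; simp
      rw [Finset.sum_congr rfl h, hockey, show a+0+m+1 = a+m+1 from by omega]
  | succ b ih =>
      intro m
      have h1 : ∀ r ∈ Finset.range (m+1), (a+r).choose r * (b+1+(m-r)).choose (m-r)
          = ∑ y ∈ Finset.range (m-r+1), (a+r).choose r * (b+y).choose y := by
        intro r _
        rw [← Finset.mul_sum, hockey, Nat.add_right_comm b 1 (m-r)]
      rw [Finset.sum_congr rfl h1, sum_swap_tri (fun r y => (a+r).choose r * (b+y).choose y) m]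
      have h2 : ∀ k ∈ Finset.range (m+1),
          ∑ r ∈ Finset.range (k+1), (a+r).choose r * (b+(k-r)).choose (k-r)
            = ((a+b+1)+k).choose k := by
        intro k _
        rw [ih k, show a+b+k+1 = (a+b+1)+k from by omega]
      rw [Finset.sum_congr rfl h2, hockey (a+b+1) m, show a+b+1+m+1 = a+(b+1)+m+1 from by omega]

/-- The key factorial identity behind the reduction of the Myerson value on a
component-complete network to the Aumann–Drèze value. -/
lemma keyNat (a s m : ℕ) :
    (∑ r ∈ Finset.range (m+1), m.choose r * ((a+r).factorial * (s+(m-r)).factorial))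
        * (a+1+s).factorial
      = (a.factorial * s.factorial) * (a+1+s+m).factorial := by
  have h1 : ∀ r ∈ Finset.range (m+1), m.choose r * ((a+r).factorial * (s+(m-r)).factorial)
      = (m.factorial * (a.factorial * s.factorial))
          * ((a+r).choose r * (s+(m-r)).choose (m-r)) := by
    intro r hr
    rw [Finset.mem_range] at hr
    have e1 : (a+r).choose r * r.factorial * a.factorial = (a+r).factorial := by
      have := Nat.choose_mul_factorial_mul_factorial (show r ≤ a + r by omega)
      simpa using this
    have e2 : (s+(m-r)).choose (m-r) * (m-r).factorial * s.factorial = (s+(m-r)).factorial := by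
      have := Nat.choose_mul_factorial_mul_factorial (show m-r ≤ s+(m-r) by omega)
      simpa using this
    have e3 : m.choose r * r.factorial * (m-r).factorial = m.factorial :=
      Nat.choose_mul_factorial_mul_factorial (by omega)
    rw [← e1, ← e2, ← e3]; ring
  rw [Finset.sum_congr rfl h1, ← Finset.mul_sum, vander a s m]
  have e4 := Nat.choose_mul_factorial_mul_factorial (show m ≤ a+s+m+1 by omega)
  rw [show a+s+m+1-m = a+1+s from by omega] at e4
  calc (m.factorial * (a.factorial * s.factorial) * (a+s+m+1).choose m) * (a+1+s).factorial
      = (a.factorial * s.factorial)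
          * ((a+s+m+1).choose m * m.factorial * (a+1+s).factorial) := by ring
    _ = (a.factorial * s.factorial) * (a+1+s+m).factorial := by
        rw [e4, show a+s+m+1 = a+1+s+m from by omega]

/-- Real-valued form of `keyNat`. -/
lemma keyReal (a s m : ℕ) :
    ∑ r ∈ Finset.range (m+1),
        ((m.choose r : ℝ) * (((a+r).factorial * (s+(m-r)).factorial : ℕ) : ℝ))
          / (((a+1+s+m).factorial : ℕ) : ℝ)
      = (((a.factorial * s.factorial : ℕ)) : ℝ) / (((a+1+s).factorial : ℕ) : ℝ) := by
  rw [← Finset.sum_div, div_eq_div_iff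
    (Nat.cast_ne_zero.mpr (Nat.factorial_ne_zero _))
    (Nat.cast_ne_zero.mpr (Nat.factorial_ne_zero _))]
  have h2 : ((∑ r ∈ Finset.range (m+1),
          m.choose r * ((a+r).factorial * (s+(m-r)).factorial) : ℕ) : ℝ)
        * (((a+1+s).factorial : ℕ) : ℝ)
      = ((a.factorial * s.factorial : ℕ) : ℝ) * (((a+1+s+m).factorial : ℕ) : ℝ) := by
    exact_mod_cast congrArg (Nat.cast : ℕ → ℝ) (keyNat a s m)
  rw [show (∑ r ∈ Finset.range (m+1),
        (m.choose r : ℝ) * (((a+r).factorial * (s+(m-r)).factorial : ℕ) : ℝ))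
      = ((∑ r ∈ Finset.range (m+1),
          m.choose r * ((a+r).factorial * (s+(m-r)).factorial) : ℕ) : ℝ) from by
    push_cast; ring]
  exact h2

/-- The inner sum over coalitions of outsiders, evaluated in closed form. -/
lemma inner_sum (c t m : ℕ) (ht1 : 1 ≤ t) (htc : t ≤ c) :
    ∑ r ∈ Finset.range (m+1), (m.choose r) •
        ((((t + r - 1).factorial * ((c + m) - (t + r)).factorial : ℕ) : ℝ)
          / (((c+m).factorial : ℕ) : ℝ))
      = (((t - 1).factorial * (c - t).factorial : ℕ) : ℝ) / ((c.factorial : ℕ) : ℝ) := by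
  have hpt : ∀ r ∈ Finset.range (m+1),
      (m.choose r) • ((((t + r - 1).factorial * ((c + m) - (t + r)).factorial : ℕ) : ℝ)
          / (((c+m).factorial : ℕ) : ℝ))
      = ((m.choose r : ℝ) * ((((t-1)+r).factorial * ((c-t)+(m-r)).factorial : ℕ) : ℝ))
          / ((((t-1)+1+(c-t)+m).factorial : ℕ) : ℝ) := by
    intro r hr
    rw [Finset.mem_range] at hr
    rw [show t + r - 1 = (t-1) + r from by omega,
      show c + m - (t + r) = (c-t) + (m - r) from by omega,
      show c + m = (t-1)+1+(c-t)+m from by omega,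
      nsmul_eq_mul, mul_div_assoc]
  rw [Finset.sum_congr rfl hpt, keyReal (t-1) (c-t) m,
    show (t-1)+1+(c-t) = c from by omega]

/-- Summing a function of `S ∩ C` against the Shapley coefficients over all
coalitions of the grand player set reduces to a Shapley-type sum over `C`. -/
lemma key_sum (C : Finset N) (i : N) (hiC : i ∈ C) (F : Finset N → ℝ) :
    ∑ S ∈ (Finset.univ : Finset N).powerset.filter (fun S => i ∈ S),
        ((((S.card - 1).factorial
              * ((Finset.univ : Finset N).card - S.card).factorial : ℕ) : ℝ) /
          (((Finset.univ : Finset N).card.factorial : ℕ) : ℝ)) * F (S ∩ C)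
      = ∑ T ∈ C.powerset.filter (fun T => i ∈ T),
        ((((T.card - 1).factorial * (C.card - T.card).factorial : ℕ) : ℝ) /
          ((C.card.factorial : ℕ) : ℝ)) * F T := by
  classical
  have hcard : (Finset.univ : Finset N).card = C.card + Cᶜ.card := by
    have h1 := Finset.card_compl C
    have h2 : C.card ≤ Fintype.card N := Finset.card_le_univ C
    rw [Finset.card_univ]
    omega
  rw [hcard]
  have step1 : ∑ S ∈ (Finset.univ : Finset N).powerset.filter (fun S => i ∈ S),
        ((((S.card - 1).factorial * ((C.card + Cᶜ.card) - S.card).factorial : ℕ) : ℝ) /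
          (((C.card + Cᶜ.card).factorial : ℕ) : ℝ)) * F (S ∩ C)
      = ∑ p ∈ (C.powerset.filter (fun T => i ∈ T)) ×ˢ Cᶜ.powerset,
        ((((p.1.card + p.2.card - 1).factorial
              * ((C.card + Cᶜ.card) - (p.1.card + p.2.card)).factorial : ℕ) : ℝ) /
          (((C.card + Cᶜ.card).factorial : ℕ) : ℝ)) * F p.1 := by
    refine Finset.sum_nbij' (fun S => (S ∩ C, S \ C)) (fun p => p.1 ∪ p.2) ?_ ?_ ?_ ?_ ?_
    · intro S hS
      rw [Finset.mem_filter] at hS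
      rw [Finset.mem_product, Finset.mem_filter, Finset.mem_powerset, Finset.mem_powerset]
      refine ⟨⟨Finset.inter_subset_right, Finset.mem_inter.mpr ⟨hS.2, hiC⟩⟩, ?_⟩
      intro k hk
      rw [Finset.mem_sdiff] at hk
      exact Finset.mem_compl.mpr hk.2
    · intro p hp
      rw [Finset.mem_product, Finset.mem_filter, Finset.mem_powerset] at hp
      rw [Finset.mem_filter, Finset.mem_powerset]
      exact ⟨Finset.subset_univ _, Finset.mem_union_left _ hp.1.2⟩
    · intro S _
      ext k
      simp only [Finset.mem_union, Finset.mem_inter, Finset.mem_sdiff]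
      tauto
    · intro p hp
      rw [Finset.mem_product, Finset.mem_filter, Finset.mem_powerset,
        Finset.mem_powerset] at hp
      obtain ⟨⟨hT, _⟩, hR⟩ := hp
      have hdis : ∀ k ∈ p.2, k ∉ C := fun k hk => Finset.mem_compl.mp (hR hk)
      refine Prod.ext ?_ ?_
      · ext k
        simp only [Finset.mem_inter, Finset.mem_union]
        constructor
        · rintro ⟨h1 | h1, h2⟩
          · exact h1
          · exact absurd h2 (hdis k h1)
        · intro h; exact ⟨Or.inl h, hT h⟩
      · ext k
        simp only [Finset.mem_sdiff, Finset.mem_union]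
        constructor
        · rintro ⟨h1 | h1, h2⟩
          · exact absurd (hT h1) h2
          · exact h1
        · intro h; exact ⟨Or.inr h, hdis k h⟩
    · intro S _
      have hc2 : (S ∩ C).card + (S \ C).card = S.card := Finset.card_inter_add_card_sdiff S C
      rw [hc2]
  rw [step1, Finset.sum_product]
  refine Finset.sum_congr rfl ?_
  intro T hT
  rw [Finset.mem_filter, Finset.mem_powerset] at hT
  obtain ⟨hTC, hiT⟩ := hT
  have ht1 : 1 ≤ T.card := Finset.card_pos.mpr ⟨i, hiT⟩
  have htc : T.card ≤ C.card := Finset.card_le_card hTC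
  have hstep : ∑ R ∈ Cᶜ.powerset,
      ((((T.card + R.card - 1).factorial
            * ((C.card + Cᶜ.card) - (T.card + R.card)).factorial : ℕ) : ℝ) /
        (((C.card + Cᶜ.card).factorial : ℕ) : ℝ)) * F T
      = ((((T.card - 1).factorial * (C.card - T.card).factorial : ℕ) : ℝ) /
          ((C.card.factorial : ℕ) : ℝ)) * F T := by
    rw [← Finset.sum_mul]
    congr 1
    have hgroup : ∑ R ∈ Cᶜ.powerset,
        ((((T.card + R.card - 1).factorial
              * ((C.card + Cᶜ.card) - (T.card + R.card)).factorial : ℕ) : ℝ) /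
          (((C.card + Cᶜ.card).factorial : ℕ) : ℝ))
        = ∑ r ∈ Finset.range (Cᶜ.card + 1), Cᶜ.card.choose r •
            ((((T.card + r - 1).factorial
                  * ((C.card + Cᶜ.card) - (T.card + r)).factorial : ℕ) : ℝ) /
              (((C.card + Cᶜ.card).factorial : ℕ) : ℝ)) :=
      Finset.sum_powerset_apply_card
        (fun r => ((((T.card + r - 1).factorial
              * ((C.card + Cᶜ.card) - (T.card + r)).factorial : ℕ) : ℝ) /
          (((C.card + Cᶜ.card).factorial : ℕ) : ℝ)))
    rw [hgroup]
    exact inner_sum C.card T.card Cᶜ.card ht1 htc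
  exact hstep

/-! ### Graph-theoretic lemmas -/

lemma mem_compOf {g : SimpleGraph N} {i j : N} : j ∈ compOf g i ↔ g.Reachable i j := by
  simp [compOf, Set.Finite.mem_toFinset]

lemma restrict_le (g : SimpleGraph N) (S : Finset N) : restrictGraph g S ≤ g :=
  fun _ _ h => h.1

lemma walk_mem {g : SimpleGraph N} {S : Finset N} {j k : N}
    (w : (restrictGraph g S).Walk j k) : j ∈ S → k ∈ S := by
  induction w with
  | nil => exact id
  | cons h _ ih => exact fun _ => ih h.2.2

lemma compIn_eq (g : SimpleGraph N)
    (hcc : ∀ i j : N, g.Reachable i j → i ≠ j → g.Adj i j)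
    {S : Finset N} {j : N} (hj : j ∈ S) :
    compIn g S j = S ∩ compOf g j := by
  ext k
  simp only [compIn, Set.Finite.mem_toFinset, Set.mem_setOf_eq, Finset.mem_inter, mem_compOf]
  constructor
  · intro h
    exact ⟨h.elim (fun w => walk_mem w hj), h.mono (restrict_le g S)⟩
  · rintro ⟨hkS, hr⟩
    rcases eq_or_ne j k with rfl | hne
    · exact SimpleGraph.Reachable.refl j
    · exact SimpleGraph.Adj.reachable ⟨hcc j k hr hne, hj, hkS⟩

lemma compOf_congr {g : SimpleGraph N} {i j : N} (h : g.Reachable i j) :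
    compOf g j = compOf g i := by
  ext k
  simp only [mem_compOf]
  exact ⟨fun h' => h.trans h', fun h' => h.symm.trans h'⟩

lemma image_insert (g : SimpleGraph N) {S : Finset N} {i : N} (hiS : i ∈ S) :
    S.image (fun j => S ∩ compOf g j)
      = insert (S ∩ compOf g i) ((S \ compOf g i).image (fun j => S ∩ compOf g j)) := by
  ext T
  simp only [Finset.mem_image, Finset.mem_insert, Finset.mem_sdiff]
  constructor
  · rintro ⟨j, hjS, rfl⟩
    by_cases hj : j ∈ compOf g i
    · left; rw [compOf_congr (mem_compOf.mp hj)]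
    · right; exact ⟨j, ⟨hjS, hj⟩, rfl⟩
  · rintro (rfl | ⟨j, ⟨hjS, _⟩, rfl⟩)
    · exact ⟨i, hiS, rfl⟩
    · exact ⟨j, hjS, rfl⟩

/-- Marginal contribution of `i` in the graph game equals its marginal
contribution within its own component. -/
lemma marg (g : SimpleGraph N)
    (hcc : ∀ i j : N, g.Reachable i j → i ≠ j → g.Adj i j)
    (v : Game N) (i : N) {S : Finset N} (hiS : i ∈ S) :
    graphGame g v S - graphGame g v (S.erase i)
      = v.1 (S ∩ compOf g i) - v.1 ((S ∩ compOf g i).erase i) := by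
  classical
  set C := compOf g i with hCdef
  have hiC : i ∈ C := mem_compOf.mpr (SimpleGraph.Reachable.refl i)
  have hnotin : ∀ j : N, j ∉ C → i ∉ compOf g j := by
    intro j hj hi'
    exact hj (mem_compOf.mpr (mem_compOf.mp hi').symm)
  set B : Finset (Finset N) := (S \ C).image (fun j => S ∩ compOf g j) with hBdef
  have hCB : ∀ T ∈ B, i ∉ T := by
    intro T hT
    rw [hBdef, Finset.mem_image] at hT
    obtain ⟨j, hj, rfl⟩ := hT
    obtain ⟨hjS, hjC⟩ := Finset.mem_sdiff.mp hj
    intro h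
    exact hnotin j hjC (Finset.mem_inter.mp h).2
  have hSCnotB : S ∩ C ∉ B := fun h => hCB _ h (Finset.mem_inter.mpr ⟨hiS, hiC⟩)
  have himc : ∀ (S' : Finset N), S'.image (fun j => compIn g S' j)
      = S'.image (fun j => S' ∩ compOf g j) := by
    intro S'
    exact Finset.image_congr (fun j hj => compIn_eq g hcc (by simpa using hj))
  have h1 : graphGame g v S = v.1 (S ∩ C) + ∑ T ∈ B, v.1 T := by
    rw [graphGame, himc S, image_insert g hiS, Finset.sum_insert hSCnotB]
  have hec : S.erase i ∩ C = (S ∩ C).erase i := by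
    ext k
    simp only [Finset.mem_erase, Finset.mem_inter]
    tauto
  have hfun : ∀ j ∈ S \ C, S.erase i ∩ compOf g j = S ∩ compOf g j := by
    intro j hj
    obtain ⟨hjS, hjC⟩ := Finset.mem_sdiff.mp hj
    ext k
    simp only [Finset.mem_inter, Finset.mem_erase]
    constructor
    · rintro ⟨⟨_, hkS⟩, hk⟩; exact ⟨hkS, hk⟩
    · rintro ⟨hkS, hk⟩
      refine ⟨⟨?_, hkS⟩, hk⟩
      rintro rfl
      exact hnotin j hjC hk
  have hSd : S.erase i \ C = S \ C := by
    ext k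
    simp only [Finset.mem_erase, Finset.mem_sdiff]
    constructor
    · rintro ⟨⟨_, hkS⟩, hkC⟩; exact ⟨hkS, hkC⟩
    · rintro ⟨hkS, hkC⟩
      exact ⟨⟨fun h => hkC (h ▸ hiC), hkS⟩, hkC⟩
  by_cases hne : (S.erase i ∩ C).Nonempty
  · obtain ⟨j0, hj0⟩ := hne
    have hj0S : j0 ∈ S.erase i := (Finset.mem_inter.mp hj0).1
    have hj0C : j0 ∈ C := (Finset.mem_inter.mp hj0).2
    have hcomp : compOf g j0 = C := compOf_congr (mem_compOf.mp hj0C)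
    have hnotB' : S.erase i ∩ C ∉ B := by
      intro h
      rw [hBdef, Finset.mem_image] at h
      obtain ⟨j, hj, hEq⟩ := h
      obtain ⟨hjS, hjC⟩ := Finset.mem_sdiff.mp hj
      have hj0' : j0 ∈ S ∩ compOf g j := hEq ▸ hj0
      have hr : g.Reachable j j0 := mem_compOf.mp (Finset.mem_inter.mp hj0').2
      exact hjC (mem_compOf.mpr ((mem_compOf.mp hj0C).trans hr.symm))
    have h2 : graphGame g v (S.erase i) = v.1 (S.erase i ∩ C) + ∑ T ∈ B, v.1 T := by
      rw [graphGame, himc (S.erase i), image_insert g hj0S, hcomp, hSd,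
        Finset.image_congr hfun, Finset.sum_insert hnotB']
    rw [h1, h2, hec]
    ring
  · have hempty : S.erase i ∩ C = ∅ := Finset.not_nonempty_iff_eq_empty.mp hne
    have hSe : S.erase i = S \ C := by
      ext k
      simp only [Finset.mem_erase, Finset.mem_sdiff]
      constructor
      · rintro ⟨hki, hkS⟩
        refine ⟨hkS, fun hkC => ?_⟩
        have hmem : k ∈ S.erase i ∩ C :=
          Finset.mem_inter.mpr ⟨Finset.mem_erase.mpr ⟨hki, hkS⟩, hkC⟩
        rw [hempty] at hmem
        exact absurd hmem (Finset.notMem_empty k)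
      · rintro ⟨hkS, hkC⟩
        exact ⟨fun h => hkC (h ▸ hiC), hkS⟩
    have hinter : ∀ j ∈ S \ C, (S \ C) ∩ compOf g j = S ∩ compOf g j := by
      intro j hj
      obtain ⟨hjS, hjC⟩ := Finset.mem_sdiff.mp hj
      ext k
      simp only [Finset.mem_inter, Finset.mem_sdiff]
      constructor
      · rintro ⟨⟨ha, _⟩, hb⟩; exact ⟨ha, hb⟩
      · rintro ⟨ha, hb⟩
        refine ⟨⟨ha, fun hkC => ?_⟩, hb⟩
        exact hjC (mem_compOf.mpr ((mem_compOf.mp hkC).trans (mem_compOf.mp hb).symm))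
    have h2 : graphGame g v (S.erase i) = ∑ T ∈ B, v.1 T := by
      rw [graphGame, himc (S.erase i), hSe, Finset.image_congr hinter]
    have hz : (S ∩ C).erase i = ∅ := by rw [← hec, hempty]
    rw [h1, h2, hz, v.2]
    ring

/-- If every component of `g` is internally complete (any two distinct mutually
reachable players are adjacent), then for every game `v` and every player `i`,
the Aumann–Drèze value `Sh_i(C, v|_C)` — where `C` is the component of `i` —
coincides with the Myerson value `Sh_i(N, v^g)`. -/
theorem aumannDreze_eq_myerson [Nonempty N] (g : SimpleGraph N)
    (hcc : ∀ i j : N, g.Reachable i j → i ≠ j → g.Adj i j) :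
    ∀ (v : Game N) (i : N),
      shapley (compOf g i) v.1 i = shapley Finset.univ (graphGame g v) i := by
  intro v i
  have hiC : i ∈ compOf g i := mem_compOf.mpr (SimpleGraph.Reachable.refl i)
  simp only [shapley]
  have hmarg : ∀ S ∈ (Finset.univ : Finset N).powerset.filter (fun S => i ∈ S),
      ((((S.card - 1).factorial
            * ((Finset.univ : Finset N).card - S.card).factorial : ℕ) : ℝ) /
        (((Finset.univ : Finset N).card.factorial : ℕ) : ℝ)) *
        (graphGame g v S - graphGame g v (S.erase i))
      = ((((S.card - 1).factorial
            * ((Finset.univ : Finset N).card - S.card).factorial : ℕ) : ℝ) /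
        (((Finset.univ : Finset N).card.factorial : ℕ) : ℝ)) *
        (v.1 (S ∩ compOf g i) - v.1 ((S ∩ compOf g i).erase i)) := by
    intro S hS
    rw [Finset.mem_filter] at hS
    rw [marg g hcc v i hS.2]
  rw [Finset.sum_congr rfl hmarg]
  exact (key_sum (compOf g i) i hiC (fun T => v.1 T - v.1 (T.erase i))).symm

end Stmt17
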